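/- Let f(x) = α₁x² + β₁x + γ₁ and g(x) = α₂x² + β₂x + γ₂ be two quadratic functions, and let u ≠ v be real numbers with f(u) = g(u) and f(v) = g(v), so that A = (u, f(u)) and B = (v, f(v)) are two common points of their graphs. Let p, q, r, s be reals with p ≠ u, q ≠ u, r ≠ v, s ≠ v, and set P = (p, f(p)), Q = (q, g(q)), R = (r, f(r)), S = (s, g(s)). Suppose A, P, Q are collinear and B, R, S are collinear. Then P R is parallel to Q S; explicitly, (f(r) − f(p))·(s − q) = (g(s) − g(q))·(r − p). -/
import Mathlib

lemma collinear_cross (a b c : ℝ × ℝ)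
    (h : Collinear ℝ ({a, b, c} : Set (ℝ × ℝ))) :
    (b.2 - a.2) * (c.1 - a.1) = (c.2 - a.2) * (b.1 - a.1) := by
  rw [collinear_iff_exists_forall_eq_smul_vadd] at h
  obtain ⟨p₀, d, hd⟩ := h
  obtain ⟨ca, ha⟩ := hd a (by simp)
  obtain ⟨cb, hb⟩ := hd b (by simp)
  obtain ⟨cc, hc⟩ := hd c (by simp)
  subst ha hb hc
  simp [Prod.ext_iff, smul_eq_mul] at *
  ring

/-- Parabolic analogue of the intersecting-circles theorem: two parabolas (graphs of
quadratics `f`, `g`) meet at `A = (u, f u)` and `B = (v, f v)`; a secant through `A`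
meets them again at `P = (p, f p)`, `Q = (q, g q)`, a secant through `B` at
`R = (r, f r)`, `S = (s, g s)`. Then `PR ∥ QS`:
`(f r − f p)(s − q) = (g s − g q)(r − p)`. -/
theorem parabolic_intersecting_theorem
    (α₁ β₁ γ₁ α₂ β₂ γ₂ u v p q r s : ℝ) (f g : ℝ → ℝ)
    (hα₁ : α₁ ≠ 0) (hα₂ : α₂ ≠ 0)
    (hf : ∀ x, f x = α₁ * x ^ 2 + β₁ * x + γ₁)
    (hg : ∀ x, g x = α₂ * x ^ 2 + β₂ * x + γ₂)
    (huv : u ≠ v) (hu : f u = g u) (hv : f v = g v)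
    (hpu : p ≠ u) (hqu : q ≠ u) (hrv : r ≠ v) (hsv : s ≠ v)
    (hAPQ : Collinear ℝ ({(u, f u), (p, f p), (q, g q)} : Set (ℝ × ℝ)))
    (hBRS : Collinear ℝ ({(v, f v), (r, f r), (s, g s)} : Set (ℝ × ℝ))) :
    (f r - f p) * (s - q) = (g s - g q) * (r - p) := by
  have c1 := collinear_cross _ _ _ hAPQ
  have c2 := collinear_cross _ _ _ hBRS
  simp only [hf, hg] at c1 c2 hu hv ⊢
  -- root relation
  have hroot : (α₁ - α₂) * (u + v) + (β₁ - β₂) = 0 := by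
    have huv' : u - v ≠ 0 := sub_ne_zero.mpr huv
    have : (u - v) * ((α₁ - α₂) * (u + v) + (β₁ - β₂)) = 0 := by
      linear_combination hu - hv
    rcases mul_eq_zero.mp this with h | h
    · exact absurd h huv'
    · exact h
  have hp : p - u ≠ 0 := sub_ne_zero.mpr hpu
  have hq : q - u ≠ 0 := sub_ne_zero.mpr hqu
  have hr : r - v ≠ 0 := sub_ne_zero.mpr hrv
  have hs : s - v ≠ 0 := sub_ne_zero.mpr hsv
  -- slope equalities
  have e1 : α₁ * (p + u) + β₁ = α₂ * (q + u) + β₂ := by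
    have : (p - u) * (q - u) * ((α₁ * (p + u) + β₁) - (α₂ * (q + u) + β₂)) = 0 := by
      linear_combination c1 - (p - u) * hu
    have := (mul_eq_zero.mp this).resolve_left (mul_ne_zero hp hq)
    linarith
  have e2 : α₁ * (r + v) + β₁ = α₂ * (s + v) + β₂ := by
    have : (r - v) * (s - v) * ((α₁ * (r + v) + β₁) - (α₂ * (s + v) + β₂)) = 0 := by
      linear_combination c2 - (r - v) * hv
    have := (mul_eq_zero.mp this).resolve_left (mul_ne_zero hr hs)
    linarith
  linear_combination (r - p) * (s - q) * (e1 + e2 - hroot) + 0 * hroot
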